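/- Let C be a tree with parallel hole positions w₁,…,w_r, (t_i) pairwise distinct trees, and C_{kh} the filling of w₁ by t_k and the other holes by t_h. Suppose u, v are parallel positions such that w₁ ≤ u, v is parallel to w₁, and C_{kh}|_u = C_{kh}|_v holds whenever k < h. Then C_{kh}|_u = C_{kh}|_v holds for all k, h ≥ 1. -/

import Mathlib

inductive RTree (α : Type) : Type where
  | node : α → List (RTree α) → RTree α

namespace RTree

variable {α : Type}

def size : RTree α → ℕ
  | node _ ts => 1 + (ts.attach.map (fun t => size t.1)).sum
decreasing_by
  simp only [RTree.node.sizeOf_spec]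
  have := List.sizeOf_lt_of_mem t.2
  omega


def height : RTree α → ℕ
  | node _ ts => (ts.attach.map (fun t => height t.1 + 1)).foldr max 0
decreasing_by
  simp only [RTree.node.sizeOf_spec]
  have := List.sizeOf_lt_of_mem t.2
  omega


inductive IsPos : RTree α → List ℕ → Prop
  | nil (t : RTree α) : IsPos t []
  | cons {a : α} {ts : List (RTree α)} {i : ℕ} {p : List ℕ} (h : i < ts.length) :
      IsPos ts[i] p → IsPos (node a ts) (i :: p)

inductive SubtreeAt : RTree α → List ℕ → RTree α → Prop
  | nil (t : RTree α) : SubtreeAt t [] t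
  | cons {a : α} {ts : List (RTree α)} {i : ℕ} {p : List ℕ} {u : RTree α} (h : i < ts.length) :
      SubtreeAt ts[i] p u → SubtreeAt (node a ts) (i :: p) u

inductive WellRanked (rk : α → ℕ) : RTree α → Prop
  | node {a : α} {ts : List (RTree α)} : ts.length = rk a →
      (∀ t ∈ ts, WellRanked rk t) → WellRanked rk (node a ts)

end RTree

instance {α : Type} [Inhabited α] : Inhabited (RTree α) := ⟨.node default []⟩

def substVars {δ : Type} (f : ℕ → RTree δ) : RTree (Sum δ ℕ) → RTree δ
  | .node (.inl d) ts => .node d (ts.attach.map (fun t => substVars f t.1))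
  | .node (.inr i) _ => f i
decreasing_by
  simp only [RTree.node.sizeOf_spec]
  have := List.sizeOf_lt_of_mem t.2
  omega


def applyHom {σ δ : Type} [Inhabited δ] (h' : σ → RTree (Sum δ ℕ)) : RTree σ → RTree δ
  | .node a ts =>
      substVars (fun i => (ts.attach.map (fun t => applyHom h' t.1)).getD i default) (h' a)
decreasing_by
  simp only [RTree.node.sizeOf_spec]
  have := List.sizeOf_lt_of_mem t.2
  omega


def HasVar {δ : Type} (u : RTree (Sum δ ℕ)) (i : ℕ) : Prop :=
  ∃ p l, RTree.SubtreeAt u p (.node (.inr i) l)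

def Nondeleting {σ δ : Type} (rk : σ → ℕ) (h' : σ → RTree (Sum δ ℕ)) : Prop :=
  ∀ (a : σ) (i : ℕ), i < rk a ↔ HasVar (h' a) i

def Nonerasing {σ δ : Type} (h' : σ → RTree (Sum δ ℕ)) : Prop :=
  ∀ (a : σ) (i : ℕ) (l : List (RTree (Sum δ ℕ))), h' a ≠ .node (.inr i) l

def TetrisFree {σ δ : Type} [Inhabited δ] (rk : σ → ℕ) (h' : σ → RTree (Sum δ ℕ)) : Prop :=
  Nondeleting rk h' ∧ Nonerasing h' ∧
  ∀ s s' : RTree σ, RTree.WellRanked rk s → RTree.WellRanked rk s' →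
    applyHom h' s = applyHom h' s' →
    (∀ p, RTree.IsPos s p ↔ RTree.IsPos s' p) ∧
    (∀ p a l a' l', RTree.SubtreeAt s p (.node a l) → RTree.SubtreeAt s' p (.node a' l') →
      h' a = h' a')

inductive Fills {δ : Type} : RTree (Sum δ Unit) → (List ℕ → RTree δ) → RTree δ → Prop
  | hole {l : List (RTree (Sum δ Unit))} (f : List ℕ → RTree δ) :
      Fills (.node (.inr ()) l) f (f [])
  | node {d : δ} {ts : List (RTree (Sum δ Unit))} {f : List ℕ → RTree δ} {us : List (RTree δ)}
      (h : ts.length = us.length)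
      (hc : ∀ (i : ℕ) (hi : i < ts.length), Fills ts[i] (fun p => f (i :: p)) (us[i]'(h ▸ hi))) :
      Fills (.node (.inl d) ts) f (.node d us)

def Par (p q : List ℕ) : Prop := ¬ p <+: q ∧ ¬ q <+: p

def HoleAt {δ : Type} (C : RTree (Sum δ Unit)) (p : List ℕ) : Prop :=
  ∃ l, RTree.SubtreeAt C p (RTree.node (Sum.inr ()) l)

theorem subtreeAt_unique {α : Type} {X : RTree α} {q : List ℕ} {s s' : RTree α}
    (h1 : RTree.SubtreeAt X q s) (h2 : RTree.SubtreeAt X q s') : s = s' := by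
  induction h1 with
  | nil => cases h2; rfl
  | cons h hs ih =>
    cases h2 with
    | cons h' hs' => exact ih hs'

theorem holeAt_cons {δ : Type} {d : δ} {ts : List (RTree (Sum δ Unit))} {i : ℕ}
    (hi : i < ts.length) {p : List ℕ} (h : HoleAt ts[i] p) :
    HoleAt (RTree.node (Sum.inl d) ts) (i :: p) := by
  obtain ⟨l, hl⟩ := h
  exact ⟨l, RTree.SubtreeAt.cons hi hl⟩

theorem fills_congr {δ : Type} {C : RTree (Sum δ Unit)} {f : List ℕ → RTree δ} {X : RTree δ}
    (hX : Fills C f X) :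
    ∀ {f' : List ℕ → RTree δ} {X' : RTree δ} {q : List ℕ} {s : RTree δ},
      Fills C f' X' → RTree.SubtreeAt X q s →
      (∀ p, HoleAt C p → (p <+: q ∨ q <+: p) → f p = f' p) →
      RTree.SubtreeAt X' q s := by
  induction hX with
  | hole f =>
    intro f' X' q s hX' hs hagree
    cases hX' with
    | hole =>
      have : f [] = f' [] := hagree [] ⟨_, RTree.SubtreeAt.nil _⟩ (Or.inl List.nil_prefix)
      rw [← this]
      exact hs
  | @node d ts f us h hc ih =>
    intro f' X' q s hX' hs hagree
    cases hX' with
    | @node _ _ _ us' h' hc' =>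
      match q, hs with
      | [], RTree.SubtreeAt.nil _ =>
        have hus : us = us' := by
          apply List.ext_getElem (by omega)
          intro i hi1 hi2
          have hits : i < ts.length := by omega
          have := ih i hits (hc' i hits) (RTree.SubtreeAt.nil _)
            (fun p hp _ => hagree (i :: p) (holeAt_cons hits hp)
              (Or.inr List.nil_prefix))
          exact subtreeAt_unique this (RTree.SubtreeAt.nil _)
        rw [← hus]
        exact RTree.SubtreeAt.nil _
      | i :: q', RTree.SubtreeAt.cons hi hs' =>
        have hits : i < ts.length := by omega
        have hagree' : ∀ p, HoleAt ts[i] p → (p <+: q' ∨ q' <+: p) →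
            (fun p => f (i :: p)) p = (fun p => f' (i :: p)) p := by
          intro p hp hcomp
          refine hagree (i :: p) (holeAt_cons hits hp) ?_
          rcases hcomp with h1 | h1
          · exact Or.inl (List.cons_prefix_cons.mpr ⟨rfl, h1⟩)
          · exact Or.inr (List.cons_prefix_cons.mpr ⟨rfl, h1⟩)
        have := ih i hits (hc' i hits) hs' hagree'
        exact RTree.SubtreeAt.cons (by omega) this

def fillFn {δ : Type} : RTree (Sum δ Unit) → (List ℕ → RTree δ) → RTree δ
  | .node (.inr _) _, f => f []
  | .node (.inl d) ts, f =>
      .node d (List.ofFn (fun i : Fin ts.length => fillFn ts[i.1] (fun p => f (i.1 :: p))))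
decreasing_by
  simp only [RTree.node.sizeOf_spec]
  have := List.sizeOf_lt_of_mem (ts.getElem_mem i.2)
  omega

theorem fills_fillFn {δ : Type} (C : RTree (Sum δ Unit)) (f : List ℕ → RTree δ) :
    Fills C f (fillFn C f) := by
  induction C, f using fillFn.induct with
  | case1 _ _ f => rw [fillFn]; exact Fills.hole f
  | case2 d ts f ih =>
    rw [fillFn]
    refine Fills.node (by simp) ?_
    intro i hi
    have : (List.ofFn (fun i : Fin ts.length => fillFn ts[i.1] (fun p => f (i.1 :: p))))[i]'(by simpa using hi)
        = fillFn ts[i] (fun p => f (i :: p)) := by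
      simp
    rw [this]
    exact ih ⟨i, hi⟩

/-- if w₁ ≤ u, v is parallel to w₁, and C_{kh}|_u = C_{kh}|_v whenever
k < h, then C_{kh}|_u = C_{kh}|_v for all k, h ≥ 1. -/
theorem stmt14 {δ : Type} (C : RTree (Sum δ Unit))
    (w : List (List ℕ)) (hw : w ≠ [])
    (hholes : ∀ p, HoleAt C p ↔ p ∈ w) (hpar : w.Pairwise Par)
    (t : ℕ → RTree δ) (ht : Function.Injective t)
    (u v : List ℕ) (huv : Par u v)
    (hu : w.head hw <+: u) (hv : Par v (w.head hw))
    (heq : ∀ k h : ℕ, k < h →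
      ∀ X, Fills C (fun p => if p = w.head hw then t k else t h) X →
        ∃ s, RTree.SubtreeAt X u s ∧ RTree.SubtreeAt X v s) :
    ∀ k h : ℕ, 1 ≤ k → 1 ≤ h →
      ∀ X, Fills C (fun p => if p = w.head hw then t k else t h) X →
        ∃ s, RTree.SubtreeAt X u s ∧ RTree.SubtreeAt X v s := by
  intro k h hk hh X hX
  set w₁ := w.head hw with hw₁
  have hw1mem : w₁ ∈ w := List.head_mem hw
  have hParSymm : Symmetric Par := fun a b ⟨h1, h2⟩ => ⟨h2, h1⟩
  have hParAll : ∀ a ∈ w, ∀ b ∈ w, a ≠ b → Par a b := by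
    intro a ha b hb hab
    exact (haveI : Std.Symm Par := ⟨fun a b hab => hParSymm hab⟩; hpar.forall ha hb hab)
  -- comparable holes with u are exactly w₁
  have hcomp_u : ∀ p, HoleAt C p → (p <+: u ∨ u <+: p) → p = w₁ := by
    intro p hp hc
    by_contra hne
    have hpw : Par p w₁ := hParAll p ((hholes p).1 hp) w₁ hw1mem hne
    rcases hc with h1 | h1
    · rcases List.prefix_or_prefix_of_prefix h1 hu with h2 | h2
      · exact hpw.1 h2
      · exact hpw.2 h2
    · exact hpw.2 (hu.trans h1)
  -- comparable holes with v are never w₁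
  have hcomp_v : ∀ p, HoleAt C p → (p <+: v ∨ v <+: p) → p ≠ w₁ := by
    intro p _ hc hne
    subst hne
    rcases hc with h1 | h1
    · exact hv.2 h1
    · exact hv.1 h1
  set m := k + h + 1 with hm
  let f : ℕ → ℕ → List ℕ → RTree δ := fun a b p => if p = w₁ then t a else t b
  have hfw : ∀ a b, f a b w₁ = t a := fun a b => if_pos rfl
  have hfo : ∀ a b p, p ≠ w₁ → f a b p = t b := fun a b p hp => if_neg hp
  have hfill : ∀ a b, Fills C (f a b) (fillFn C (f a b)) := fun a b => fills_fillFn C (f a b)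
  obtain ⟨s1, hs1u, hs1v⟩ := heq k m (by omega) (fillFn C (f k m)) (hfill k m)
  obtain ⟨s2, hs2u, hs2v⟩ := heq 0 m (by omega) (fillFn C (f 0 m)) (hfill 0 m)
  obtain ⟨s3, hs3u, hs3v⟩ := heq 0 h (by omega) (fillFn C (f 0 h)) (hfill 0 h)
  -- transfer along u (same first index) and along v (same second index)
  have agu : ∀ a b b', ∀ p, HoleAt C p → (p <+: u ∨ u <+: p) → f a b p = f a b' p := by
    intro a b b' p hp hc
    rw [hcomp_u p hp hc, hfw, hfw]
  have agv : ∀ a a' b, ∀ p, HoleAt C p → (p <+: v ∨ v <+: p) → f a b p = f a' b p := by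
    intro a a' b p hp hc
    rw [hfo a b p (hcomp_v p hp hc), hfo a' b p (hcomp_v p hp hc)]
  -- C_{k,m}|u = C_{k,h}|u
  have hXu : RTree.SubtreeAt X u s1 := fills_congr (hfill k m) hX hs1u (agu k m h)
  -- C_{k,m}|v = C_{0,m}|v
  have h2v : RTree.SubtreeAt (fillFn C (f 0 m)) v s1 :=
    fills_congr (hfill k m) (hfill 0 m) hs1v (agv k 0 m)
  have e12 : s1 = s2 := subtreeAt_unique h2v hs2v
  -- C_{0,m}|u = C_{0,h}|u
  have h3u : RTree.SubtreeAt (fillFn C (f 0 h)) u s2 :=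
    fills_congr (hfill 0 m) (hfill 0 h) hs2u (agu 0 m h)
  have e23 : s2 = s3 := subtreeAt_unique h3u hs3u
  -- C_{0,h}|v = C_{k,h}|v
  have hXv : RTree.SubtreeAt X v s3 := fills_congr (hfill 0 h) hX hs3v (agv 0 k h)
  exact ⟨s1, hXu, by rw [e12, e23]; exact hXv⟩
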